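/- Let u ∈ BMOA(𝕋), H_u the anti-linear Hankel operator, K_u = S*H_u, and s > 0 with u not orthogonal to E_K(s) = Ker(K_u² - s²I). Then S(E_K(s) ∩ (K_u u)^⊥) = E_H(s), where E_H(s) = Ker(H_u² - s²I). -/

import Mathlib

open MeasureTheory Complex Real ComplexConjugate AddCircle

noncomputable section

instance fact2pi : Fact (0 < 2 * π) := ⟨by positivity⟩

abbrev Tc : Type := AddCircle (2 * π)

abbrev haarT : Measure Tc := haarAddCircle

abbrev HL2 : Type := Lp ℂ 2 haarT

def IsHardy (f : HL2) : Prop := ∀ n : ℤ, n < 0 → fourierCoeff (⇑f) n = 0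

def IsHardyFun (u : Tc → ℂ) : Prop := ∀ n : ℤ, n < 0 → fourierCoeff u n = 0

def IsInnerF (θ : Tc → ℂ) : Prop :=
  AEStronglyMeasurable θ haarT ∧ (∀ᵐ x ∂haarT, ‖θ x‖ = 1) ∧ IsHardyFun θ

def IsHankelOp (u : Tc → ℂ) (H : HL2 → HL2) : Prop :=
  MemLp u 2 haarT ∧ IsHardyFun u ∧
  (∃ C : ℝ, ∀ f, ‖H f‖ ≤ C * ‖f‖) ∧
  (∀ f g, H (f + g) = H f + H g) ∧
  (∀ (c : ℂ) (f : HL2), H (c • f) = conj c • H f) ∧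
  (∀ f, IsHardy (H f)) ∧
  (∀ f g : HL2, IsHardy g →
    Integrable (fun x => u x * conj (f x) * conj (g x)) haarT →
    (inner ℂ g (H f) : ℂ) = ∫ x, u x * conj (f x) * conj (g x) ∂haarT)

def IsShiftAdjOf (H K : HL2 → HL2) : Prop :=
  ∀ f, IsHardy (K f) ∧
    ∀ n : ℤ, 0 ≤ n → fourierCoeff (⇑(K f)) n = fourierCoeff (⇑(H f)) (n + 1)

def IsSzego (P : HL2 →L[ℂ] HL2) : Prop :=
  (∀ f, IsHardy (P f)) ∧ ∀ f g : HL2, IsHardy g → (inner ℂ g (f - P f) : ℂ) = 0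

def MemKz (θ : Tc → ℂ) (f : HL2) : Prop :=
  IsHardy f ∧ ∀ h w : HL2, IsHardy h →
    (⇑w =ᵐ[haarT] fun x => fourier 1 x * θ x * h x) → (inner ℂ w f : ℂ) = 0

def MemK (θ : Tc → ℂ) (f : HL2) : Prop :=
  IsHardy f ∧ ∀ h w : HL2, IsHardy h →
    (⇑w =ᵐ[haarT] fun x => θ x * h x) → (inner ℂ w f : ℂ) = 0



namespace St12

/-- fourier coefficient of an `L²` element -/
def fc (v : HL2) (n : ℤ) : ℂ := fourierCoeff (⇑v) n

lemma fourierCoeff_congr {f g : Tc → ℂ} (h : f =ᵐ[haarT] g) (n : ℤ) :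
    fourierCoeff f n = fourierCoeff g n := by
  unfold fourierCoeff
  exact integral_congr_ae (h.mono fun x hx => by simp only [hx])

lemma fc_congr {v : HL2} {f : Tc → ℂ} (h : ⇑v =ᵐ[haarT] f) (n : ℤ) :
    fc v n = fourierCoeff f n := fourierCoeff_congr h n

lemma fc_repr (v : HL2) (n : ℤ) : fc v n = fourierBasis.repr v n :=
  (fourierBasis_repr v n).symm

lemma fc_add (v w : HL2) (n : ℤ) : fc (v + w) n = fc v n + fc w n := by
  simp only [fc_repr, map_add]
  rfl

lemma fc_smul (z : ℂ) (v : HL2) (n : ℤ) : fc (z • v) n = z * fc v n := by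
  rw [fc_repr, fc_repr, _root_.map_smul, lp.coeFn_smul, Pi.smul_apply, smul_eq_mul]

lemma fc_basis (i n : ℤ) : fc (fourierLp 2 i) n = if n = i then 1 else 0 := by
  classical
  have h1 : (fourierLp (T := 2 * π) 2 i) = fourierBasis i := by
    rw [coe_fourierBasis]
  rw [fc_repr, h1, fourierBasis.repr_self, lp.single_apply]
  split_ifs <;> simp_all

lemma inner_basis (i : ℤ) (v : HL2) : (inner ℂ (fourierLp 2 i) v : ℂ) = fc v i := by
  have h1 : (fourierLp (T := 2 * π) 2 i) = fourierBasis i := by rw [coe_fourierBasis]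
  rw [h1, ← fourierBasis.repr_apply_apply, ← fc_repr]

lemma parseval (a b : HL2) : (inner ℂ a b : ℂ) = ∑' n : ℤ, conj (fc a n) * fc b n := by
  rw [← fourierBasis.tsum_inner_mul_inner a b]
  congr 1
  ext i
  congr 1
  · rw [← inner_conj_symm]
    congr 1
    rw [coe_fourierBasis, inner_basis]
  · rw [coe_fourierBasis, inner_basis]

lemma norm_fourier (k : ℤ) (x : Tc) : ‖fourier k x‖ = 1 := by
  rw [fourier_apply]
  exact Circle.norm_coe _

lemma fourierCoeff_fourier_mul (k n : ℤ) (f : Tc → ℂ) :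
    fourierCoeff (fun x => fourier k x * f x) n = fourierCoeff f (n - k) := by
  have key : ∀ x : Tc, fourier (-n) x • (fourier k x * f x) = fourier (-(n - k)) x • f x := by
    intro x
    have h2 : @fourier (2 * π) (-n) x * fourier k x = fourier (-(n - k)) x := by
      rw [← fourier_add]
      congr 1
      ring
    rw [smul_eq_mul, smul_eq_mul, ← h2]
    ring
  unfold fourierCoeff
  simp_rw [key]

lemma memLp_fourier_mul (k : ℤ) (v : HL2) :
    MemLp (fun x => fourier k x * v x) 2 haarT := by
  refine MemLp.of_le (Lp.memLp v)
    (((fourier k).continuous.aestronglyMeasurable).mul (Lp.aestronglyMeasurable v)) ?_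
  filter_upwards with x
  rw [norm_mul, norm_fourier, one_mul]

/-- multiplication by `fourier k` as an operator on `L²` -/
def mulF (k : ℤ) (v : HL2) : HL2 := (memLp_fourier_mul k v).toLp _

lemma coeFn_mulF (k : ℤ) (v : HL2) :
    ⇑(mulF k v) =ᵐ[haarT] fun x => fourier k x * v x := MemLp.coeFn_toLp _

lemma fc_mulF (k : ℤ) (v : HL2) (n : ℤ) : fc (mulF k v) n = fc v (n - k) := by
  rw [fc_congr (coeFn_mulF k v), fourierCoeff_fourier_mul]
  rfl

lemma mulF_smul (k : ℤ) (z : ℂ) (v : HL2) : mulF k (z • v) = z • mulF k v := by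
  apply fourierBasis.repr.injective
  ext n
  rw [← fc_repr, ← fc_repr, fc_mulF, fc_smul, fc_smul, fc_mulF]

lemma ext_fc {a b : HL2} (h : ∀ n, fc a n = fc b n) : a = b := by
  apply fourierBasis.repr.injective
  ext n
  rw [← fc_repr, ← fc_repr]
  exact h n

end St12

namespace St12

section Hankel

variable {u : HL2} {H K : HL2 → HL2}

lemma integrable_aux (hH : IsHankelOp (⇑u) H) (f : HL2) (k : ℤ) :
    Integrable (fun x => u x * conj (f x) * conj (fourier k x)) haarT := by
  have h1 : Integrable (fun x : Tc => (inner ℂ ((mulF k f) x) (u x) : ℂ)) haarT :=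
    L2.integrable_inner (𝕜 := ℂ) (mulF k f) u
  refine h1.congr ?_
  filter_upwards [coeFn_mulF k f] with x hx
  rw [RCLike.inner_apply, hx]
  simp only [map_mul]
  ring

/-- Fact (A): nonnegative Fourier coefficients of `H f`. -/
lemma fcH (hH : IsHankelOp (⇑u) H) (f : HL2) (n : ℤ) (hn : 0 ≤ n) :
    fc (H f) n = fourierCoeff (fun x => u x * conj (f x)) n := by
  have hg : IsHardy (fourierLp (T := 2 * π) 2 n) := by
    intro m hm
    have := fc_basis n m
    rw [fc] at this
    rw [this, if_neg (by omega)]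
  have hint : Integrable (fun x => u x * conj (f x) * conj ((fourierLp (T := 2*π) 2 n) x)) haarT := by
    refine (integrable_aux hH f n).congr ?_
    filter_upwards [coeFn_fourierLp (T := 2 * π) 2 n] with x hx
    rw [hx]
  have h2 := hH.2.2.2.2.2.2 f (fourierLp 2 n) hg hint
  rw [inner_basis] at h2
  rw [h2]
  unfold fourierCoeff
  refine integral_congr_ae ?_
  filter_upwards [coeFn_fourierLp (T := 2 * π) 2 n] with x hx
  rw [hx, smul_eq_mul, ← fourier_neg]
  ring

/-- Parseval form of the symbol coefficients. -/
lemma phi_parseval (f : HL2) (n : ℤ) :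
    fourierCoeff (fun x => u x * conj (f x)) n = ∑' m : ℤ, conj (fc f m) * fc u (m + n) := by
  have h1 : fourierCoeff (fun x => u x * conj (f x)) n = (inner ℂ (mulF n f) u : ℂ) := by
    rw [L2.inner_def]
    unfold fourierCoeff
    refine integral_congr_ae ?_
    filter_upwards [coeFn_mulF n f] with x hx
    rw [RCLike.inner_apply, hx, smul_eq_mul]
    simp only [map_mul, ← fourier_neg]
    ring
  rw [h1, parseval]
  rw [← (Equiv.addRight n).tsum_eq (fun m => conj (fc (mulF n f) m) * fc u m)]
  refine tsum_congr fun m => ?_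
  simp only [Equiv.coe_addRight, fc_mulF, add_sub_cancel_right]

end Hankel
end St12

namespace St12

section Hankel2

open Filter

variable {u : HL2} {H K : HL2 → HL2}

lemma sym_e (hH : IsHankelOp (⇑u) H) (n : ℤ) (hn : 0 ≤ n) (b : HL2) (hb : IsHardy b) :
    (inner ℂ (fourierLp 2 n) (H b) : ℂ) = inner ℂ b (H (fourierLp 2 n)) := by
  rw [inner_basis, fcH hH b n hn, phi_parseval, parseval]
  refine tsum_congr fun m => ?_
  rcases lt_or_ge m 0 with hm | hm
  · rw [show fc b m = 0 from hb m hm]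
    simp
  · congr 1
    rw [fcH hH (fourierLp 2 n) m hm]
    have he : (fun x => u x * conj ((fourierLp (T := 2 * π) 2 n) x)) =ᵐ[haarT]
        (fun x => fourier (-n) x * u x) := by
      filter_upwards [coeFn_fourierLp (T := 2 * π) 2 n] with x hx
      rw [hx, ← fourier_neg]
      ring
    rw [fourierCoeff_congr he, fourierCoeff_fourier_mul]
    have : m - -n = m + n := by ring
    rw [this]
    rfl

lemma H_zero (hH : IsHankelOp (⇑u) H) : H 0 = 0 := by
  have h := hH.2.2.2.1 0 0
  rw [add_zero] at h
  exact (left_eq_add.mp h)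

lemma H_sub (hH : IsHankelOp (⇑u) H) (x y : HL2) : H (x - y) = H x - H y := by
  have h := hH.2.2.2.1 (x - y) y
  rw [sub_add_cancel] at h
  exact eq_sub_of_add_eq h.symm

lemma symH (hH : IsHankelOp (⇑u) H) (a b : HL2) (ha : IsHardy a) (hb : IsHardy b) :
    (inner ℂ a (H b) : ℂ) = inner ℂ b (H a) := by
  classical
  obtain ⟨C, hC⟩ := hH.2.2.1
  have hsum : HasSum (fun i : ℤ => fc a i • (fourierLp (T := 2 * π) 2 i)) a := by
    unfold fc
    exact hasSum_fourier_series_L2 a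
  set p : Finset ℤ → HL2 := fun F => ∑ i ∈ F, fc a i • fourierLp 2 i with hp
  have hT : Tendsto p atTop (nhds a) := hsum
  have key : ∀ F, (inner ℂ (p F) (H b) : ℂ) = inner ℂ b (H (p F)) := by
    intro F
    rw [sum_inner]
    have hHp : H (p F) = ∑ i ∈ F, conj (fc a i) • H (fourierLp 2 i) := by
      induction F using Finset.induction_on with
      | empty => simpa [hp] using H_zero hH
      | insert _ _ hni ih =>
        simp only [hp] at ih ⊢
        rw [Finset.sum_insert hni, Finset.sum_insert hni, hH.2.2.2.1, hH.2.2.2.2.1, ih]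
    rw [hHp, inner_sum]
    refine Finset.sum_congr rfl fun i _ => ?_
    rw [inner_smul_left, inner_smul_right]
    rcases lt_or_ge i 0 with hi | hi
    · rw [show fc a i = 0 from ha i hi]
      simp
    · rw [sym_e hH i hi b hb]
  have l1 : Tendsto (fun F => (inner ℂ (p F) (H b) : ℂ)) atTop (nhds (inner ℂ a (H b))) :=
    hT.inner tendsto_const_nhds
  have hnorm : Tendsto (fun F => ‖p F - a‖) atTop (nhds 0) :=
    tendsto_iff_norm_sub_tendsto_zero.mp hT
  have l2' : Tendsto (fun F => H (p F)) atTop (nhds (H a)) := by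
    rw [tendsto_iff_norm_sub_tendsto_zero]
    refine squeeze_zero (g := fun F => C * ‖p F - a‖) (fun F => norm_nonneg _) (fun F => ?_) ?_
    · rw [← H_sub hH]
      exact hC _
    · simpa using hnorm.const_mul C
  have l2 : Tendsto (fun F => (inner ℂ b (H (p F)) : ℂ)) atTop (nhds (inner ℂ b (H a))) :=
    tendsto_const_nhds.inner l2'
  exact tendsto_nhds_unique (l1.congr key) l2

lemma mulF_hardy {a : HL2} (ha : IsHardy a) {k : ℤ} (hk : 0 ≤ k) : IsHardy (mulF k a) := by
  intro n hn
  have := fc_mulF k a n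
  rw [fc] at this
  rw [this]
  exact ha _ (by omega)

/-- `H (fourier 1 • v) = K v`. -/
lemma HS (hH : IsHankelOp (⇑u) H) (hKs : IsShiftAdjOf H K) (v : HL2) :
    H (mulF 1 v) = K v := by
  refine ext_fc fun n => ?_
  rcases lt_or_ge n 0 with hn | hn
  · rw [show fc (H (mulF 1 v)) n = 0 from hH.2.2.2.2.2.1 _ n hn,
      show fc (K v) n = 0 from (hKs v).1 n hn]
  · rw [fcH hH _ n hn]
    have he : (fun x => u x * conj ((mulF 1 v) x)) =ᵐ[haarT]
        (fun x => fourier (-1) x * (u x * conj (v x))) := by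
      filter_upwards [coeFn_mulF 1 v] with x hx
      rw [hx]
      simp only [map_mul, ← fourier_neg]
      ring
    rw [fourierCoeff_congr he, fourierCoeff_fourier_mul]
    have h1 : n - -1 = n + 1 := by ring
    rw [h1, ← fcH hH v (n + 1) (by omega)]
    exact ((hKs v).2 n hn).symm

lemma adjS (hH : IsHankelOp (⇑u) H) (hKs : IsShiftAdjOf H K) (a b : HL2) (ha : IsHardy a) :
    (inner ℂ a (K b) : ℂ) = inner ℂ (mulF 1 a) (H b) := by
  rw [parseval, parseval]
  rw [← (Equiv.addRight (1 : ℤ)).tsum_eq (fun m => conj (fc (mulF 1 a) m) * fc (H b) m)]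
  refine tsum_congr fun n => ?_
  simp only [Equiv.coe_addRight, fc_mulF, add_sub_cancel_right]
  rcases lt_or_ge n 0 with hn | hn
  · rw [show fc a n = 0 from ha n hn]
    simp
  · have h2 := (hKs b).2 n hn
    unfold fc
    rw [h2]

lemma symK (hH : IsHankelOp (⇑u) H) (hKs : IsShiftAdjOf H K) (a b : HL2)
    (ha : IsHardy a) (hb : IsHardy b) : (inner ℂ a (K b) : ℂ) = inner ℂ b (K a) := by
  rw [adjS hH hKs a b ha, symH hH (mulF 1 a) b (mulF_hardy ha (by omega)) hb, HS hH hKs]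

/-- `H e₀ = u`. -/
lemma HE0 (hH : IsHankelOp (⇑u) H) (hu : IsHardy u) : H (fourierLp 2 0) = u := by
  refine ext_fc fun n => ?_
  rcases lt_or_ge n 0 with hn | hn
  · rw [show fc (H (fourierLp 2 0)) n = 0 from hH.2.2.2.2.2.1 _ n hn,
      show fc u n = 0 from hu n hn]
  · rw [fcH hH _ n hn]
    have he : (fun x => u x * conj ((fourierLp (T := 2 * π) 2 0) x)) =ᵐ[haarT] ⇑u := by
      filter_upwards [coeFn_fourierLp (T := 2 * π) 2 0] with x hx
      rw [hx, fourier_zero, map_one, mul_one]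
    rw [fourierCoeff_congr he]
    rfl

lemma inner_vu (v : HL2) :
    (inner ℂ v u : ℂ) = fourierCoeff (fun x => u x * conj (v x)) 0 := by
  rw [L2.inner_def]
  unfold fourierCoeff
  refine integral_congr_ae ?_
  filter_upwards with x
  rw [RCLike.inner_apply, neg_zero, fourier_zero, one_smul]

/-- the decomposition `H v = S (K v) + ⟪v, u⟫ e₀`. -/
lemma decomp (hH : IsHankelOp (⇑u) H) (hKs : IsShiftAdjOf H K) (v : HL2) :
    H v = mulF 1 (K v) + (inner ℂ v u : ℂ) • (fourierLp 2 0) := by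
  refine ext_fc fun n => ?_
  rw [fc_add, fc_smul, fc_mulF, fc_basis]
  rcases lt_or_ge n 0 with hn | hn
  · rw [show fc (H v) n = 0 from hH.2.2.2.2.2.1 _ n hn,
      show fc (K v) (n - 1) = 0 from (hKs v).1 _ (by omega), if_neg (by omega)]
    ring
  · rcases eq_or_lt_of_le hn with h0 | h0
    · rw [← h0, if_pos rfl, show (0 : ℤ) - 1 = -1 by ring,
        show fc (K v) (-1) = 0 from (hKs v).1 _ (by omega),
        fcH hH v 0 le_rfl, ← inner_vu]
      ring
    · rw [if_neg (by omega), mul_zero, add_zero]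
      have h2 := (hKs v).2 (n - 1) (by omega)
      rw [show n - 1 + 1 = n by ring] at h2
      unfold fc
      exact h2.symm

/-- the key identity `H² = K² + ⟪u, ·⟫ u`. -/
lemma Hsq (hH : IsHankelOp (⇑u) H) (hKs : IsShiftAdjOf H K) (hu : IsHardy u) (v : HL2) :
    H (H v) = K (K v) + (inner ℂ u v : ℂ) • u := by
  conv_lhs => rw [decomp hH hKs v]
  rw [hH.2.2.2.1, hH.2.2.2.2.1, HS hH hKs, HE0 hH hu, inner_conj_symm]

end Hankel2
end St12

/-- in the `K`-dominant case, the shift `S` maps `E_K(s) ∩ (K_u u)^⊥`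
onto `E_H(s)`. -/
theorem shift_maps_EK_perp_Kuu_onto_EH
    (u : HL2) (hu : IsHardy u) (H K : HL2 → HL2)
    (hH : IsHankelOp (⇑u) H) (hKs : IsShiftAdjOf H K)
    (s : ℝ) (hs : 0 < s)
    (hdom : ∃ f : HL2, IsHardy f ∧ K (K f) = ((s : ℂ) ^ 2) • f ∧ (inner ℂ u f : ℂ) ≠ 0) :
    {g : HL2 | ∃ h : HL2,
        (IsHardy h ∧ K (K h) = ((s : ℂ) ^ 2) • h ∧ (inner ℂ (K u) h : ℂ) = 0) ∧
        ⇑g =ᵐ[haarT] fun x => fourier 1 x * h x} =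
    {g : HL2 | IsHardy g ∧ H (H g) = ((s : ℂ) ^ 2) • g} := by
  have hHhardy := hH.2.2.2.2.2.1
  have hs2 : ((s : ℂ) ^ 2) ≠ 0 := pow_ne_zero _ (by
    simpa using Complex.ofReal_ne_zero.mpr hs.ne')
  have hconj : conj ((s : ℂ) ^ 2) = (s : ℂ) ^ 2 := by
    rw [map_pow, Complex.conj_ofReal]
  obtain ⟨f, hf1, hf2, hf3⟩ := hdom
  have claim : ∀ w : HL2, IsHardy w → H (H w) = ((s : ℂ) ^ 2) • w →
      (inner ℂ w u : ℂ) = 0 := by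
    intro w hw hw2
    have e1 : (inner ℂ w (H (H f)) : ℂ)
        = (s : ℂ) ^ 2 * inner ℂ w f + (inner ℂ u f : ℂ) * inner ℂ w u := by
      rw [St12.Hsq hH hKs hu f, hf2, inner_add_right, inner_smul_right, inner_smul_right]
    have e2 : (inner ℂ w (H (H f)) : ℂ) = (s : ℂ) ^ 2 * inner ℂ w f := by
      rw [St12.symH hH w (H f) hw (hHhardy f), ← inner_conj_symm,
        St12.symH hH (H w) f (hHhardy w) hf1, hw2, inner_smul_right,
        map_mul, hconj, inner_conj_symm]
    have h3 : (inner ℂ u f : ℂ) * inner ℂ w u = 0 := by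
      have := e1.symm.trans e2
      linear_combination this
    exact (mul_eq_zero.mp h3).resolve_left hf3
  ext g
  simp only [Set.mem_setOf_eq]
  constructor
  · rintro ⟨h, ⟨hh1, hh2, hh3⟩, hg⟩
    have hgS : g = St12.mulF 1 h := St12.ext_fc fun n => by
      rw [St12.fc_congr hg, ← St12.fc_congr (St12.coeFn_mulF 1 h)]
    have hKhu : (inner ℂ (K h) u : ℂ) = 0 := by
      rw [← inner_conj_symm, St12.symK hH hKs u h hu hh1, ← inner_conj_symm, hh3]
      simp
    rw [hgS]
    refine ⟨St12.mulF_hardy hh1 (by omega), ?_⟩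
    rw [St12.HS hH hKs h, St12.decomp hH hKs (K h), hh2, St12.mulF_smul, hKhu,
      zero_smul, add_zero]
  · rintro ⟨hg1, hg2⟩
    have h3 : H (H (H g)) = ((s : ℂ) ^ 2) • H g := by
      have h4 := congrArg H hg2
      rwa [hH.2.2.2.2.1, hconj] at h4
    have hHgu : (inner ℂ (H g) u : ℂ) = 0 := claim (H g) (hHhardy g) h3
    have hg0 : St12.fc g 0 = 0 := by
      have e : St12.fc (H (H g)) 0 = (inner ℂ (H g) u : ℂ) := by
        rw [St12.fcH hH (H g) 0 le_rfl, ← St12.inner_vu]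
      rw [hg2, St12.fc_smul, hHgu] at e
      exact (mul_eq_zero.mp e).resolve_left hs2
    set h : HL2 := St12.mulF (-1) g with hh
    have hfc : ∀ n, St12.fc h n = St12.fc g (n + 1) := fun n => by
      rw [hh, St12.fc_mulF, show n - -1 = n + 1 by ring]
    have hh1 : IsHardy h := by
      intro n hn
      have h5 := hfc n
      rw [St12.fc] at h5
      rw [h5]
      rcases eq_or_lt_of_le (by omega : n + 1 ≤ 0) with h1 | h1
      · exact h1 ▸ hg0
      · exact hg1 _ h1
    have hgS : g = St12.mulF 1 h := St12.ext_fc fun n => by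
      rw [St12.fc_mulF, hfc, show n - 1 + 1 = n by ring]
    have hae : ⇑g =ᵐ[haarT] fun x => fourier 1 x * h x := by
      have h6 := St12.coeFn_mulF 1 h
      rwa [← hgS] at h6
    have hHg : H g = K h := by rw [hgS]; exact St12.HS hH hKs h
    have heq : St12.mulF 1 (K (K h)) + (inner ℂ (K h) u : ℂ) • (fourierLp 2 0)
        = St12.mulF 1 (((s : ℂ) ^ 2) • h) := by
      calc St12.mulF 1 (K (K h)) + (inner ℂ (K h) u : ℂ) • (fourierLp 2 0)
          = H (K h) := (St12.decomp hH hKs (K h)).symm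
        _ = H (H g) := by rw [hHg]
        _ = ((s : ℂ) ^ 2) • g := hg2
        _ = St12.mulF 1 (((s : ℂ) ^ 2) • h) := by rw [hgS, St12.mulF_smul]
    have hKhu : (inner ℂ (K h) u : ℂ) = 0 := by
      have h7 : St12.fc (St12.mulF 1 (K (K h)) + (inner ℂ (K h) u : ℂ) • (fourierLp 2 0)) 0
          = St12.fc (St12.mulF 1 (((s : ℂ) ^ 2) • h)) 0 := by rw [heq]
      rw [St12.fc_add, St12.fc_mulF, St12.fc_smul, St12.fc_mulF, St12.fc_smul,
        St12.fc_basis, if_pos rfl, mul_one,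
        show St12.fc (K (K h)) (0 - 1) = 0 from (hKs (K h)).1 _ (by omega),
        show St12.fc h (0 - 1) = 0 from hh1 _ (by omega), mul_zero, zero_add] at h7
      exact h7
    have hK2 : K (K h) = ((s : ℂ) ^ 2) • h := St12.ext_fc fun n => by
      have h7 : St12.fc (St12.mulF 1 (K (K h)) + (inner ℂ (K h) u : ℂ) • (fourierLp 2 0)) (n + 1)
          = St12.fc (St12.mulF 1 (((s : ℂ) ^ 2) • h)) (n + 1) := by rw [heq]
      rw [St12.fc_add, St12.fc_mulF, St12.fc_smul, St12.fc_mulF, hKhu, zero_mul, add_zero,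
        show n + 1 - 1 = n by ring] at h7
      exact h7
    have hKuh : (inner ℂ (K u) h : ℂ) = 0 := by
      rw [← inner_conj_symm, St12.symK hH hKs h u hh1 hu, ← inner_conj_symm, hKhu]
      simp
    exact ⟨h, ⟨hh1, hK2, hKuh⟩, hae⟩

end
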